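/- The matrix CᵀD⁻¹C is invertible and D P^D_{𝒯^{⊥_D}} = C(CᵀD⁻¹C)⁻¹Cᵀ; consequently, for any I×L matrix Z whose (j,k)-th row z_{jk}ᵀ satisfies z_{j0} = 0 and z_{0k} = 0 for all j,k, one has Zᵀ D P^D_{𝒯^{⊥_D}} Z = Z°ᵀ(CᵀD⁻¹C)⁻¹Z°. -/

import Mathlib

open Matrix BigOperators

noncomputable section

/-- Cells `(j,k)` of a `(J+1) × (K+1)` contingency table. -/
abbrev Cell (J K : ℕ) := Fin (J + 1) × Fin (K + 1)

/-- Standard unit vector `e_{jk}` in `ℝ^I`. -/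
def eV {J K : ℕ} (c : Cell J K) : Cell J K → ℝ := Pi.single c 1

/-- Row-sum vector `e_{j+} = Σ_k e_{jk}`. -/
def eRow {J K : ℕ} (j : Fin (J + 1)) : Cell J K → ℝ := ∑ k : Fin (K + 1), eV (j, k)

/-- Column-sum vector `e_{+k} = Σ_j e_{jk}`. -/
def eCol {J K : ℕ} (k : Fin (K + 1)) : Cell J K → ℝ := ∑ j : Fin (J + 1), eV (j, k)

/-- The all-ones vector `e_{++}`. -/
def eAll (J K : ℕ) : Cell J K → ℝ := ∑ j : Fin (J + 1), ∑ k : Fin (K + 1), eV (j, k)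

/-- The row space `ℛ = span{e_{0+},…,e_{J+}}`. -/
def rowSpace (J K : ℕ) : Submodule ℝ (Cell J K → ℝ) :=
  Submodule.span ℝ (Set.range (eRow (J := J) (K := K)))

/-- The column space `𝒞 = span{e_{+0},…,e_{+K}}`. -/
def colSpace (J K : ℕ) : Submodule ℝ (Cell J K → ℝ) :=
  Submodule.span ℝ (Set.range (eCol (J := J) (K := K)))

/-- The diagonal space `𝒟 = span{e_{++}}`. -/
def diagSpace (J K : ℕ) : Submodule ℝ (Cell J K → ℝ) :=
  Submodule.span ℝ {eAll J K}

/-- The marginal space `𝒯 = ℛ + 𝒞`. -/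
def margSpace (J K : ℕ) : Submodule ℝ (Cell J K → ℝ) := rowSpace J K ⊔ colSpace J K

/-- `P` is the `D`-orthogonal projection matrix onto the subspace `S`:
`P x ∈ S` and `x - P x` is `D`-orthogonal to `S`, for every `x`. -/
def IsProjD {J K : ℕ} (D : Matrix (Cell J K) (Cell J K) ℝ) (S : Submodule ℝ (Cell J K → ℝ))
    (P : Matrix (Cell J K) (Cell J K) ℝ) : Prop :=
  ∀ x, P.mulVec x ∈ S ∧ ∀ s ∈ S, (x - P.mulVec x) ⬝ᵥ D.mulVec s = 0

/-- The `D`-orthogonal complement of a subspace `S`. -/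
def perpD {J K : ℕ} (D : Matrix (Cell J K) (Cell J K) ℝ) (S : Submodule ℝ (Cell J K → ℝ)) :
    Submodule ℝ (Cell J K → ℝ) where
  carrier := {x | ∀ t ∈ S, x ⬝ᵥ D.mulVec t = 0}
  add_mem' := by
    intro a b ha hb t ht
    simp only [Set.mem_setOf_eq] at *
    simp [add_dotProduct, ha t ht, hb t ht]
  zero_mem' := by
    intro t ht
    simp
  smul_mem' := by
    intro c a ha t ht
    simp only [Set.mem_setOf_eq] at *
    simp [smul_dotProduct, ha t ht]

/-- The vector `c_{jk} = e_{jk} + e_{00} - e_{j0} - e_{0k}` (for `1 ≤ j`, `1 ≤ k`). -/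
def cVec {J K : ℕ} (j : Fin J) (k : Fin K) : Cell J K → ℝ :=
  eV (j.succ, k.succ) + eV (0, 0) - eV (j.succ, 0) - eV (0, k.succ)

/-- The `I × (JK)` matrix `C` with columns `c_{jk}`. -/
def Cmat (J K : ℕ) : Matrix (Cell J K) (Fin J × Fin K) ℝ :=
  fun i jk => cVec jk.1 jk.2 i

/-- The vector `b_k = e_{0k} - e_{00}` (for `1 ≤ k`). -/
def bVec {J K : ℕ} (k : Fin K) : Cell J K → ℝ :=
  eV ((0 : Fin (J + 1)), k.succ) - eV (0, 0)

/-- The `I × K` matrix `B` with columns `b_k`. -/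
def Bmat (J K : ℕ) : Matrix (Cell J K) (Fin K) ℝ :=
  fun i k => bVec k i

/-- The `I × K` matrix `E` with columns `e_{+1},…,e_{+K}`. -/
def Emat (J K : ℕ) : Matrix (Cell J K) (Fin K) ℝ :=
  fun i k => eCol k.succ i

/-- Column space of a matrix. -/
def colSpan {m n : Type*} [Fintype n] (A : Matrix m n ℝ) : Submodule ℝ (m → ℝ) :=
  Submodule.span ℝ (Set.range fun j => fun i => A i j)

/-- The reduced `(JK) × L` covariate matrix `Z°` with rows `z_{jk}ᵀ`, `j,k ≥ 1`. -/
def Zred {J K : ℕ} {L : Type*} (Z : Matrix (Cell J K) L ℝ) : Matrix (Fin J × Fin K) L ℝ :=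
  fun jk => Z (jk.1.succ, jk.2.succ)

/-- The model space `ℋ = 𝒯 + col(Z)` of the log-linear model
`η_{jk} = α + ρ_j + γ_k + z_{jk}ᵀ θ`. -/
def modelSpace {J K : ℕ} {L : Type*} [Fintype L] (Z : Matrix (Cell J K) L ℝ) :
    Submodule ℝ (Cell J K → ℝ) :=
  margSpace J K ⊔ colSpan Z

end
section Aux
variable {J K : ℕ}

lemma eV_apply (c i : Cell J K) : eV c i = if i = c then 1 else 0 := by
  simp [eV, Pi.single_apply]

lemma eRow_apply (j : Fin (J+1)) (i : Cell J K) :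
    (eRow j : Cell J K → ℝ) i = if i.1 = j then 1 else 0 := by
  simp only [eRow, Finset.sum_apply, eV_apply, Prod.ext_iff]
  rcases i with ⟨a, b⟩
  simp [ite_and, Finset.sum_ite_eq]

lemma eCol_apply (k : Fin (K+1)) (i : Cell J K) :
    (eCol k : Cell J K → ℝ) i = if i.2 = k then 1 else 0 := by
  simp only [eCol, Finset.sum_apply, eV_apply, Prod.ext_iff]
  rcases i with ⟨a, b⟩
  simp [ite_and, Finset.sum_ite_eq]

lemma cVec_apply (j : Fin J) (k : Fin K) (i : Cell J K) :
    cVec j k i = (if i = (j.succ, k.succ) then 1 else 0) + (if i = ((0 : Fin (J+1)), (0 : Fin (K+1))) then 1 else 0)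
      - (if i = (j.succ, (0 : Fin (K+1))) then 1 else 0) - (if i = ((0 : Fin (J+1)), k.succ) then 1 else 0) := by
  simp [cVec, eV_apply]

end Aux
section Aux2
variable {J K : ℕ}
lemma cVec_dot_eRow' (j' : Fin J) (k' : Fin K) (j : Fin (J+1)) :
    cVec j' k' ⬝ᵥ (eRow j : Cell J K → ℝ) = 0 := by
  simp only [dotProduct, cVec_apply, eRow_apply, Fintype.sum_prod_type, Prod.mk.injEq, ite_and]
  simp [Finset.sum_ite_eq, Finset.sum_ite_eq', mul_ite]
  split_ifs <;> norm_num [Finset.sum_add_distrib, Finset.sum_ite_eq, Finset.sum_ite_eq']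
lemma cVec_dot_eCol' (j' : Fin J) (k' : Fin K) (k : Fin (K+1)) :
    cVec j' k' ⬝ᵥ (eCol k : Cell J K → ℝ) = 0 := by
  simp only [dotProduct, cVec_apply, eCol_apply, Fintype.sum_prod_type, Prod.mk.injEq, ite_and]
  simp [Finset.sum_ite_eq, Finset.sum_ite_eq', mul_ite]
  split_ifs <;> norm_num [Finset.sum_add_distrib, Finset.sum_ite_eq, Finset.sum_ite_eq']
end Aux2
section Aux3
variable {J K : ℕ}

lemma eRow_vecMul_C (j : Fin (J+1)) : (eRow j : Cell J K → ℝ) ᵥ* Cmat J K = 0 := by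
  funext c
  have h := cVec_dot_eRow' c.1 c.2 j
  rw [dotProduct_comm] at h
  simpa [Matrix.vecMul, Cmat, dotProduct] using h

lemma eCol_vecMul_C (k : Fin (K+1)) : (eCol k : Cell J K → ℝ) ᵥ* Cmat J K = 0 := by
  funext c
  have h := cVec_dot_eCol' c.1 c.2 k
  rw [dotProduct_comm] at h
  simpa [Matrix.vecMul, Cmat, dotProduct] using h

lemma marg_vecMul_C {t : Cell J K → ℝ} (ht : t ∈ margSpace J K) : t ᵥ* Cmat J K = 0 := by
  have ht' : t ∈ Submodule.span ℝ (Set.range (eRow (J:=J) (K:=K)) ∪ Set.range (eCol (J:=J) (K:=K))) := by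
    rw [Submodule.span_union]; exact ht
  clear ht
  induction ht' using Submodule.span_induction with
  | mem x hx =>
    rcases hx with ⟨j, rfl⟩ | ⟨k, rfl⟩
    · exact eRow_vecMul_C j
    · exact eCol_vecMul_C k
  | zero => simp [Matrix.zero_vecMul]
  | add a b _ _ ha hb => simp [Matrix.add_vecMul, ha, hb]
  | smul r a _ ha => simp [Matrix.smul_vecMul, ha]

lemma Cmulvec_dot_marg (w : Fin J × Fin K → ℝ) {t : Cell J K → ℝ} (ht : t ∈ margSpace J K) :
    (Cmat J K *ᵥ w) ⬝ᵥ t = 0 := by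
  rw [dotProduct_comm, dotProduct_mulVec, marg_vecMul_C ht, zero_dotProduct]

lemma eRow_mem_marg (j : Fin (J+1)) : (eRow j : Cell J K → ℝ) ∈ margSpace J K :=
  Submodule.mem_sup_left (Submodule.subset_span ⟨j, rfl⟩)

lemma eCol_mem_marg (k : Fin (K+1)) : (eCol k : Cell J K → ℝ) ∈ margSpace J K :=
  Submodule.mem_sup_right (Submodule.subset_span ⟨k, rfl⟩)

lemma diag_inv {μ : Cell J K → ℝ} (hμ : ∀ i, 0 < μ i) :
    (Matrix.diagonal μ)⁻¹ = Matrix.diagonal (fun i => (μ i)⁻¹) := by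
  apply Matrix.inv_eq_right_inv
  rw [Matrix.diagonal_mul_diagonal]
  convert Matrix.diagonal_one using 2
  exact funext fun i => mul_inv_cancel₀ (hμ i).ne'

lemma dinv_dot {μ : Cell J K → ℝ} (hμ : ∀ i, 0 < μ i) (u t : Cell J K → ℝ) :
    ((Matrix.diagonal μ)⁻¹ *ᵥ u) ⬝ᵥ ((Matrix.diagonal μ) *ᵥ t) = u ⬝ᵥ t := by
  rw [diag_inv hμ]
  simp only [dotProduct, Matrix.mulVec_diagonal]
  refine Finset.sum_congr rfl fun i _ => ?_
  have h0 : μ i ≠ 0 := (hμ i).ne'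
  rw [show (μ i)⁻¹ * u i * (μ i * t i) = (μ i * (μ i)⁻¹) * (u i * t i) by ring,
    mul_inv_cancel₀ h0, one_mul]

end Aux3
section Aux4
variable {J K : ℕ}

lemma Cmat_mulVec_apply (w : Fin J × Fin K → ℝ) (i : Cell J K) :
    (Cmat J K *ᵥ w) i =
      (∑ c : Fin J × Fin K, (if i = (c.1.succ, c.2.succ) then 1 else 0) * w c)
      + (if i = ((0 : Fin (J+1)), (0 : Fin (K+1))) then 1 else 0) * (∑ c : Fin J × Fin K, w c)
      - (∑ c : Fin J × Fin K, (if i = (c.1.succ, (0 : Fin (K+1))) then 1 else 0) * w c)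
      - (∑ c : Fin J × Fin K, (if i = ((0 : Fin (J+1)), c.2.succ) then 1 else 0) * w c) := by
  simp only [Matrix.mulVec, dotProduct, Cmat, cVec_apply, sub_mul, add_mul,
    Finset.sum_sub_distrib, Finset.sum_add_distrib, Finset.mul_sum]

lemma row_sum_eq_zero {μ s : Cell J K → ℝ}
    (hs : s ∈ perpD (Matrix.diagonal μ) (margSpace J K)) (j : Fin (J+1)) :
    ∑ k : Fin (K+1), (Matrix.diagonal μ *ᵥ s) (j, k) = 0 := by
  have h := hs (eRow j) (eRow_mem_marg j)
  simp only [dotProduct, Matrix.mulVec_diagonal, eRow_apply, Fintype.sum_prod_type,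
    mul_ite, mul_one, mul_zero, Finset.sum_ite_irrel, Finset.sum_ite_eq',
    Finset.mem_univ, if_true] at h
  simpa [Matrix.mulVec_diagonal, mul_comm] using h

lemma col_sum_eq_zero {μ s : Cell J K → ℝ}
    (hs : s ∈ perpD (Matrix.diagonal μ) (margSpace J K)) (k : Fin (K+1)) :
    ∑ j : Fin (J+1), (Matrix.diagonal μ *ᵥ s) (j, k) = 0 := by
  have h := hs (eCol k) (eCol_mem_marg k)
  simp only [dotProduct, Matrix.mulVec_diagonal, eCol_apply, Fintype.sum_prod_type,
    mul_ite, mul_one, mul_zero, Finset.sum_ite_irrel, Finset.sum_ite_eq',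
    Finset.mem_univ, if_true] at h
  simpa [Matrix.mulVec_diagonal, mul_comm] using h

end Aux4
section Aux5
variable {J K : ℕ}

lemma zero_eq_succ_iff {n : ℕ} (x : Fin n) : ((0 : Fin (n+1)) = x.succ) ↔ False :=
  ⟨fun h => Fin.succ_ne_zero x h.symm, False.elim⟩

lemma Dmulvec_mem_range_C {μ s : Cell J K → ℝ}
    (hs : s ∈ perpD (Matrix.diagonal μ) (margSpace J K)) :
    Matrix.diagonal μ *ᵥ s =
      Cmat J K *ᵥ (fun c => (Matrix.diagonal μ *ᵥ s) (c.1.succ, c.2.succ)) := by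
  set v : Cell J K → ℝ := Matrix.diagonal μ *ᵥ s with hv
  have hrow : ∀ j : Fin (J+1), ∑ k : Fin (K+1), v (j, k) = 0 := fun j => row_sum_eq_zero hs j
  have hcol : ∀ k : Fin (K+1), ∑ j : Fin (J+1), v (j, k) = 0 := fun k => col_sum_eq_zero hs k
  funext i
  rcases i with ⟨a, b⟩
  rw [Cmat_mulVec_apply]
  induction a using Fin.cases with
  | zero =>
    induction b using Fin.cases with
    | zero =>
      simp only [Prod.mk.injEq, zero_eq_succ_iff, Fin.succ_ne_zero, false_and, and_false,
        if_false, ite_false, ite_true, and_self, Finset.sum_const_zero, zero_mul, one_mul,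
        zero_add, sub_zero]
      have h0 := hrow 0
      rw [Fin.sum_univ_succ] at h0
      have h1 : ∀ k' : Fin K, v (0, k'.succ) = - ∑ j' : Fin J, v (j'.succ, k'.succ) := by
        intro k'
        have h := hcol k'.succ
        rw [Fin.sum_univ_succ] at h
        linarith
      rw [Fintype.sum_prod_type, Finset.sum_comm]
      have h2 : ∑ k' : Fin K, v ((0 : Fin (J+1)), k'.succ)
          = ∑ k' : Fin K, (- ∑ j' : Fin J, v (j'.succ, k'.succ)) :=
        Finset.sum_congr rfl fun k' _ => h1 k'
      rw [Finset.sum_neg_distrib] at h2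
      linarith
    | succ b =>
      simp only [Prod.mk.injEq, zero_eq_succ_iff, Fin.succ_ne_zero, false_and, and_false,
        if_false, ite_false, ite_true, and_self, Finset.sum_const_zero, zero_mul, one_mul,
        zero_add, sub_zero, zero_sub, Fin.succ_inj, true_and, ite_and]
      rw [Fintype.sum_prod_type]
      simp only [ite_mul, one_mul, zero_mul, Finset.sum_ite_eq, Finset.mem_univ, if_true]
      have h := hcol b.succ
      rw [Fin.sum_univ_succ] at h
      linarith
  | succ a =>
    induction b using Fin.cases with
    | zero =>
      simp only [Prod.mk.injEq, zero_eq_succ_iff, Fin.succ_ne_zero, false_and, and_false,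
        if_false, ite_false, ite_true, and_self, Finset.sum_const_zero, zero_mul, one_mul,
        zero_add, sub_zero, zero_sub, Fin.succ_inj, true_and, and_true, ite_and]
      rw [Fintype.sum_prod_type, Finset.sum_comm]
      simp only [ite_mul, one_mul, zero_mul, Finset.sum_ite_eq, Finset.mem_univ, if_true]
      have h := hrow a.succ
      rw [Fin.sum_univ_succ] at h
      linarith
    | succ b =>
      simp only [Prod.mk.injEq, zero_eq_succ_iff, Fin.succ_ne_zero, false_and, and_false,
        if_false, ite_false, ite_true, and_self, Finset.sum_const_zero, zero_mul, one_mul,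
        zero_add, sub_zero, zero_sub, Fin.succ_inj, true_and, and_true, ite_and]
      rw [add_zero, Fintype.sum_prod_type]
      simp [ite_mul, one_mul, zero_mul, Finset.sum_ite_eq, Finset.sum_ite_irrel,
        Finset.sum_const_zero]
end Aux5
section Aux6
variable {J K : ℕ}

lemma Cmat_mulVec_succ (v : Fin J × Fin K → ℝ) (j : Fin J) (k : Fin K) :
    (Cmat J K *ᵥ v) (j.succ, k.succ) = v (j, k) := by
  rw [Cmat_mulVec_apply]
  simp only [Prod.mk.injEq, Fin.succ_ne_zero, zero_eq_succ_iff, false_and, and_false,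
    if_false, ite_false, Finset.sum_const_zero, zero_mul, sub_zero, add_zero,
    Fin.succ_inj, ite_and, ite_mul, one_mul, zero_mul]
  rw [Fintype.sum_prod_type]
  simp [Finset.sum_ite_eq, Finset.sum_ite_irrel, Finset.sum_const_zero]

lemma M_posDef {μ : Cell J K → ℝ} (hμ : ∀ i, 0 < μ i) :
    ((Cmat J K)ᵀ * (Matrix.diagonal μ)⁻¹ * Cmat J K).PosDef := by
  rw [diag_inv hμ]
  rw [Matrix.posDef_iff_dotProduct_mulVec]
  constructor
  · show _ᴴ = _
    rw [Matrix.conjTranspose_eq_transpose_of_trivial]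
    simp [Matrix.transpose_mul, Matrix.transpose_transpose, Matrix.diagonal_transpose,
      Matrix.mul_assoc]
  · intro x hx
    have hy : Cmat J K *ᵥ x ≠ 0 := by
      intro h
      apply hx
      funext c
      have := congrFun h (c.1.succ, c.2.succ)
      rwa [Cmat_mulVec_succ, Pi.zero_apply] at this
    set y := Cmat J K *ᵥ x with hyd
    have key : star x ⬝ᵥ ((Cmat J K)ᵀ * Matrix.diagonal (fun i => (μ i)⁻¹) * Cmat J K) *ᵥ x
        = ∑ i, (μ i)⁻¹ * (y i * y i) := by
      rw [star_trivial, ← Matrix.mulVec_mulVec, ← Matrix.mulVec_mulVec,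
        Matrix.dotProduct_mulVec, Matrix.vecMul_transpose]
      simp [dotProduct, Matrix.mulVec_diagonal]
      exact Finset.sum_congr rfl fun i _ => by ring
    rw [key]
    obtain ⟨c, hc⟩ := Function.ne_iff.mp hy
    apply Finset.sum_pos'
    · intro i _
      exact mul_nonneg (inv_pos.mpr (hμ i)).le (mul_self_nonneg _)
    · refine ⟨c, Finset.mem_univ c, ?_⟩
      have h1 : 0 < (μ c)⁻¹ := inv_pos.mpr (hμ c)
      have h2 : 0 < y c * y c := mul_self_pos.mpr hc
      exact mul_pos h1 h2

lemma isProjD_unique {μ : Cell J K → ℝ} (hμ : ∀ i, 0 < μ i)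
    (S : Submodule ℝ (Cell J K → ℝ)) (P₁ P₂ : Matrix (Cell J K) (Cell J K) ℝ)
    (h1 : IsProjD (Matrix.diagonal μ) S P₁) (h2 : IsProjD (Matrix.diagonal μ) S P₂) :
    P₁ = P₂ := by
  have hx : ∀ x, P₁ *ᵥ x = P₂ *ᵥ x := by
    intro x
    set d : Cell J K → ℝ := P₁ *ᵥ x - P₂ *ᵥ x with hd
    have hdS : d ∈ S := S.sub_mem (h1 x).1 (h2 x).1
    have ha := (h1 x).2 d hdS
    have hb := (h2 x).2 d hdS
    have hzero : d ⬝ᵥ (Matrix.diagonal μ *ᵥ d) = 0 := by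
      have h := sub_eq_zero.mpr (ha.trans hb.symm)
      rw [← sub_dotProduct] at h
      have he : (x - P₁ *ᵥ x) - (x - P₂ *ᵥ x) = -d := by rw [hd]; abel
      rw [he, neg_dotProduct, neg_eq_zero] at h
      exact h
    have hall : ∀ i, d i = 0 := by
      have hnn : ∀ i ∈ Finset.univ, (0:ℝ) ≤ d i * (μ i * d i) := by
        intro i _
        have := hμ i
        nlinarith [sq_nonneg (d i)]
      have hsum : ∑ i, d i * (μ i * d i) = 0 := by
        simpa [dotProduct, Matrix.mulVec_diagonal] using hzero
      intro i
      have h0 := (Finset.sum_eq_zero_iff_of_nonneg hnn).mp hsum i (Finset.mem_univ i)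
      rw [show d i * (μ i * d i) = μ i * (d i * d i) from by ring] at h0
      rcases mul_eq_zero.mp h0 with h | h
      · exact absurd h (hμ i).ne'
      · exact mul_self_eq_zero.mp h
    have : d = 0 := funext hall
    rw [hd, sub_eq_zero] at this
    exact this
  apply Matrix.ext
  intro i j
  have := congrFun (hx (Pi.single j 1)) i
  simpa [Matrix.mulVec_single] using this

end Aux6
section Aux7
variable {J K : ℕ}

lemma isProjD_Q {μ : Cell J K → ℝ} (hμ : ∀ i, 0 < μ i) :
    IsProjD (Matrix.diagonal μ) (perpD (Matrix.diagonal μ) (margSpace J K))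
      ((Matrix.diagonal μ)⁻¹ * (Cmat J K *
        (((Cmat J K)ᵀ * (Matrix.diagonal μ)⁻¹ * Cmat J K)⁻¹ * (Cmat J K)ᵀ))) := by
  set M := (Cmat J K)ᵀ * (Matrix.diagonal μ)⁻¹ * Cmat J K with hM
  have hMdet : IsUnit M.det := ((Matrix.isUnit_iff_isUnit_det M).mp (M_posDef hμ).isUnit)
  set Q := (Matrix.diagonal μ)⁻¹ * (Cmat J K * (M⁻¹ * (Cmat J K)ᵀ)) with hQ
  have hCQ : (Cmat J K)ᵀ * Q = (Cmat J K)ᵀ := by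
    rw [hQ, show (Cmat J K)ᵀ * ((Matrix.diagonal μ)⁻¹ * (Cmat J K * (M⁻¹ * (Cmat J K)ᵀ)))
        = ((Cmat J K)ᵀ * (Matrix.diagonal μ)⁻¹ * Cmat J K) * M⁻¹ * (Cmat J K)ᵀ from by
      simp only [Matrix.mul_assoc], ← hM, Matrix.mul_nonsing_inv M hMdet, Matrix.one_mul]
  have hQC : Qᵀ * Cmat J K = Cmat J K := by
    have := congrArg Matrix.transpose hCQ
    rwa [Matrix.transpose_mul, Matrix.transpose_transpose] at this
  intro x
  constructor
  · intro t ht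
    rw [hQ, ← Matrix.mulVec_mulVec, dinv_dot hμ, ← Matrix.mulVec_mulVec]
    exact Cmulvec_dot_marg _ ht
  · intro s hsS
    rw [Dmulvec_mem_range_C hsS, Matrix.dotProduct_mulVec]
    suffices h : (x - Q *ᵥ x) ᵥ* Cmat J K = 0 by rw [h, zero_dotProduct]
    rw [Matrix.sub_vecMul, ← Matrix.vecMul_transpose Q x, Matrix.vecMul_vecMul, hQC, sub_self]

end Aux7
/-- `CᵀD⁻¹C` is invertible and `D P^D_{𝒯^{⊥_D}} = C(CᵀD⁻¹C)⁻¹Cᵀ`;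
consequently, for any `I×L` matrix `Z` with vanishing rows `z_{j0}` and `z_{0k}`,
`Zᵀ D P^D_{𝒯^{⊥_D}} Z = Z°ᵀ(CᵀD⁻¹C)⁻¹Z°`. -/
theorem D_proj_marg_perp_representation
    {J K : ℕ} (hJ : 1 ≤ J) (hK : 1 ≤ K)
    (μ : Cell J K → ℝ) (hμ : ∀ i, 0 < μ i)
    (PTperp : Matrix (Cell J K) (Cell J K) ℝ)
    (hPTperp : IsProjD (Matrix.diagonal μ) (perpD (Matrix.diagonal μ) (margSpace J K)) PTperp) :
    IsUnit ((Cmat J K)ᵀ * (Matrix.diagonal μ)⁻¹ * Cmat J K) ∧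
    Matrix.diagonal μ * PTperp =
      Cmat J K * ((Cmat J K)ᵀ * (Matrix.diagonal μ)⁻¹ * Cmat J K)⁻¹ * (Cmat J K)ᵀ ∧
    ∀ (L : ℕ) (Z : Matrix (Cell J K) (Fin L) ℝ),
      (∀ j, Z (j, 0) = 0) → (∀ k, Z (0, k) = 0) →
      Zᵀ * (Matrix.diagonal μ * PTperp) * Z =
        (Zred Z)ᵀ * ((Cmat J K)ᵀ * (Matrix.diagonal μ)⁻¹ * Cmat J K)⁻¹ * Zred Z := by
  have hMunit : IsUnit ((Cmat J K)ᵀ * (Matrix.diagonal μ)⁻¹ * Cmat J K) := (M_posDef hμ).isUnit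
  have hPT : PTperp = (Matrix.diagonal μ)⁻¹ * (Cmat J K *
      (((Cmat J K)ᵀ * (Matrix.diagonal μ)⁻¹ * Cmat J K)⁻¹ * (Cmat J K)ᵀ)) :=
    isProjD_unique hμ _ _ _ hPTperp (isProjD_Q hμ)
  have hDdet : IsUnit (Matrix.diagonal μ).det := by
    rw [Matrix.det_diagonal]
    exact isUnit_iff_ne_zero.mpr (Finset.prod_ne_zero_iff.mpr fun i _ => (hμ i).ne')
  have hDP : Matrix.diagonal μ * PTperp =
      Cmat J K * ((Cmat J K)ᵀ * (Matrix.diagonal μ)⁻¹ * Cmat J K)⁻¹ * (Cmat J K)ᵀ := by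
    rw [hPT, ← Matrix.mul_assoc, Matrix.mul_nonsing_inv _ hDdet, Matrix.one_mul,
      ← Matrix.mul_assoc]
  refine ⟨hMunit, hDP, ?_⟩
  intro L Z hZrow hZcol
  have h1 : ∀ (j : Fin (J+1)) (l : Fin L), Z (j, (0 : Fin (K+1))) l = 0 :=
    fun j l => congrFun (hZrow j) l
  have h2 : ∀ (k : Fin (K+1)) (l : Fin L), Z ((0 : Fin (J+1)), k) l = 0 :=
    fun k l => congrFun (hZcol k) l
  have hCZ : (Cmat J K)ᵀ * Z = Zred Z := by
    ext c l
    simp only [Matrix.mul_apply, Matrix.transpose_apply, Cmat, cVec_apply, Zred, sub_mul,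
      add_mul, Finset.sum_sub_distrib, Finset.sum_add_distrib, ite_mul, one_mul, zero_mul,
      Finset.sum_ite_eq', Finset.mem_univ, if_true, h1, h2]
    ring
  have hZC : Zᵀ * Cmat J K = (Zred Z)ᵀ := by
    have h := congrArg Matrix.transpose hCZ
    rwa [Matrix.transpose_mul, Matrix.transpose_transpose] at h
  rw [hDP, show Zᵀ * (Cmat J K * ((Cmat J K)ᵀ * (Matrix.diagonal μ)⁻¹ * Cmat J K)⁻¹ * (Cmat J K)ᵀ) * Z
      = (Zᵀ * Cmat J K) * ((Cmat J K)ᵀ * (Matrix.diagonal μ)⁻¹ * Cmat J K)⁻¹ * ((Cmat J K)ᵀ * Z) from by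
    simp only [Matrix.mul_assoc], hCZ, hZC]
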